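/- Assume 1 ≤ minsupp ≤ |𝒯| and let X ∈ MCR. Then the sets A := {F ∈ MFCRMax : X ⊆ F} and B := {G ∈ MMCRMin : G ⊆ X} are nonempty. Put R1 := max{Supp(∧F) : F ∈ A}, R2 := min{Supp(∧G) : G ∈ B}, R3 := min{Supp(∨F) : F ∈ A}, R4 := max{Supp(∨G) : G ∈ B}, and MinConj := min(R1,R2), MaxConj := max(R1,R2), MinDisj := min(R3,R4), MaxDisj := max(R3,R4). Then MinConj ≤ Supp(∧X) ≤ MaxConj, MinDisj ≤ Supp(∨X) ≤ MaxDisj, the quantities MinDisj and MaxDisj are positive, and MinConj/MaxDisj ≤ bond(X) ≤ MaxConj/MinDisj. -/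
import Mathlib


open Finset

variable {τ ι : Type*} [DecidableEq ι]

/-- Conjunctive support: number of transactions containing the whole pattern. -/
def suppConj (T : Finset τ) (items : τ → Finset ι) (X : Finset ι) : ℕ :=
  (T.filter fun t => X ⊆ items t).card

/-- Disjunctive support: number of transactions containing at least one item of the pattern. -/
def suppDisj (T : Finset τ) (items : τ → Finset ι) (X : Finset ι) : ℕ :=
  (T.filter fun t => (X ∩ items t).Nonempty).card

/-- The bond measure (division by zero in `ℚ` yields `0`, matching the convention). -/
def bond (T : Finset τ) (items : τ → Finset ι) (X : Finset ι) : ℚ :=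
  (suppConj T items X : ℚ) / (suppDisj T items X : ℚ)

/-- Correlated rare patterns, as a finite set. -/
def MCR (T : Finset τ) (items : τ → Finset ι) (I : Finset ι) (minsupp : ℕ) (minbond : ℚ) :
    Finset (Finset ι) :=
  I.powerset.filter fun X => minbond ≤ bond T items X ∧ suppConj T items X < minsupp

/-- Closed correlated rare patterns. -/
def MFCR (T : Finset τ) (items : τ → Finset ι) (I : Finset ι) (minsupp : ℕ) (minbond : ℚ) :
    Finset (Finset ι) :=
  (MCR T items I minsupp minbond).filter fun X =>
    ∀ Y ∈ I.powerset, X ⊂ Y → bond T items Y ≠ bond T items X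

/-- Minimal correlated rare patterns. -/
def MMCR (T : Finset τ) (items : τ → Finset ι) (I : Finset ι) (minsupp : ℕ) (minbond : ℚ) :
    Finset (Finset ι) :=
  (MCR T items I minsupp minbond).filter fun X =>
    ∀ Y ∈ X.powerset, Y ⊂ X → bond T items Y ≠ bond T items X

/-- Maximal correlated patterns. -/
def MCMax (T : Finset τ) (items : τ → Finset ι) (I : Finset ι) (minbond : ℚ) :
    Finset (Finset ι) :=
  I.powerset.filter fun X =>
    minbond ≤ bond T items X ∧ ∀ Y ∈ I.powerset, X ⊂ Y → ¬ minbond ≤ bond T items Y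

/-- Minimal rare patterns. -/
def MRMin (T : Finset τ) (items : τ → Finset ι) (I : Finset ι) (minsupp : ℕ) :
    Finset (Finset ι) :=
  I.powerset.filter fun X =>
    suppConj T items X < minsupp ∧ ∀ Y ∈ X.powerset, Y ⊂ X → ¬ suppConj T items Y < minsupp

/-- Maximal closed correlated rare patterns. -/
def MFCRMax (T : Finset τ) (items : τ → Finset ι) (I : Finset ι) (minsupp : ℕ) (minbond : ℚ) :
    Finset (Finset ι) :=
  MFCR T items I minsupp minbond ∩ MCMax T items I minbond

/-- The minimal elements of `MMCR`. -/
def MMCRMin (T : Finset τ) (items : τ → Finset ι) (I : Finset ι) (minsupp : ℕ) (minbond : ℚ) :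
    Finset (Finset ι) :=
  MMCR T items I minsupp minbond ∩ MRMin T items I minsupp

lemma suppConj_anti (T : Finset τ) (items : τ → Finset ι) {X Y : Finset ι} (h : X ⊆ Y) :
    suppConj T items Y ≤ suppConj T items X := by
  apply Finset.card_le_card
  intro t ht
  simp only [Finset.mem_filter] at *
  exact ⟨ht.1, h.trans ht.2⟩

lemma suppDisj_mono (T : Finset τ) (items : τ → Finset ι) {X Y : Finset ι} (h : X ⊆ Y) :
    suppDisj T items X ≤ suppDisj T items Y := by
  apply Finset.card_le_card
  intro t ht
  simp only [Finset.mem_filter] at *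
  exact ⟨ht.1, ht.2.mono (Finset.inter_subset_inter h (Finset.Subset.refl _))⟩

lemma suppConj_le_suppDisj (T : Finset τ) (items : τ → Finset ι) {X : Finset ι}
    (hX : X.Nonempty) : suppConj T items X ≤ suppDisj T items X := by
  apply Finset.card_le_card
  intro t ht
  simp only [Finset.mem_filter] at *
  exact ⟨ht.1, by rw [Finset.inter_eq_left.mpr ht.2]; exact hX⟩

lemma pos_of_bond_pos (T : Finset τ) (items : τ → Finset ι) {X : Finset ι}
    (h : 0 < bond T items X) : 0 < suppConj T items X ∧ 0 < suppDisj T items X := by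
  rw [bond] at h
  have hd : suppDisj T items X ≠ 0 := by
    intro h0
    rw [h0] at h; simp at h
  have hc : suppConj T items X ≠ 0 := by
    intro h0
    rw [h0] at h; simp at h
  exact ⟨Nat.pos_of_ne_zero hc, Nat.pos_of_ne_zero hd⟩

lemma bond_anti (T : Finset τ) (items : τ → Finset ι) {Y X : Finset ι} (hYX : Y ⊆ X)
    (hY : Y.Nonempty) (hc : 0 < suppConj T items X) :
    bond T items X ≤ bond T items Y := by
  have hcc : suppConj T items X ≤ suppConj T items Y := suppConj_anti T items hYX
  have hdd : suppDisj T items Y ≤ suppDisj T items X := suppDisj_mono T items hYX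
  have hcY : 0 < suppConj T items Y := lt_of_lt_of_le hc hcc
  have hdY : 0 < suppDisj T items Y := lt_of_lt_of_le hcY (suppConj_le_suppDisj T items hY)
  rw [bond, bond]
  exact div_le_div₀ (by positivity) (by exact_mod_cast hcc) (by exact_mod_cast hdY)
    (by exact_mod_cast hdd)

theorem stmt14 (T : Finset τ) (items : τ → Finset ι) (I : Finset ι)
    (hitems : ∀ t ∈ T, items t ⊆ I)
    (minsupp : ℕ) (minbond : ℚ)
    (hs1 : 1 ≤ minsupp) (hs2 : minsupp ≤ T.card)
    (hb0 : 0 < minbond) (hb1 : minbond ≤ 1)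
    (X : Finset ι) (hX : X ∈ MCR T items I minsupp minbond) :
    let A := (MFCRMax T items I minsupp minbond).filter fun F => X ⊆ F
    let B := (MMCRMin T items I minsupp minbond).filter fun G => G ⊆ X
    ∃ hA : A.Nonempty, ∃ hB : B.Nonempty,
      let R1 := A.sup' hA (suppConj T items)
      let R2 := B.inf' hB (suppConj T items)
      let R3 := A.inf' hA (suppDisj T items)
      let R4 := B.sup' hB (suppDisj T items)
      let MinConj := min R1 R2
      let MaxConj := max R1 R2
      let MinDisj := min R3 R4
      let MaxDisj := max R3 R4
      MinConj ≤ suppConj T items X ∧ suppConj T items X ≤ MaxConj ∧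
        MinDisj ≤ suppDisj T items X ∧ suppDisj T items X ≤ MaxDisj ∧
          0 < MinDisj ∧ 0 < MaxDisj ∧
            (MinConj : ℚ) / (MaxDisj : ℚ) ≤ bond T items X ∧
              bond T items X ≤ (MaxConj : ℚ) / (MinDisj : ℚ) := by
  intro A B
  have hXmem := hX
  simp only [MCR, Finset.mem_filter, Finset.mem_powerset] at hXmem
  obtain ⟨hXI, hXbond, hXrare⟩ := hXmem
  have hbpos : 0 < bond T items X := lt_of_lt_of_le hb0 hXbond
  obtain ⟨hconjpos, hdisjpos⟩ := pos_of_bond_pos T items hbpos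
  have hXne : X.Nonempty := by
    rcases X.eq_empty_or_nonempty with h | h
    · exfalso; subst h; simp [suppDisj] at hdisjpos
    · exact h
  -- Existence of a maximal closed correlated rare superset F
  obtain ⟨F, hFS, hFmax⟩ :=
    (I.powerset.filter (fun Y => X ⊆ Y ∧ minbond ≤ bond T items Y)).exists_max_image
      Finset.card ⟨X, by simp [hXI, hXbond]⟩
  simp only [Finset.mem_filter, Finset.mem_powerset] at hFS
  obtain ⟨hFI, hXF, hFbond⟩ := hFS
  have hFtop : ∀ Y ⊆ I, F ⊂ Y → ¬ minbond ≤ bond T items Y := by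
    intro Y hY hFY hbY
    have hYS : Y ∈ I.powerset.filter (fun Y => X ⊆ Y ∧ minbond ≤ bond T items Y) := by
      simp only [Finset.mem_filter, Finset.mem_powerset]
      exact ⟨hY, hXF.trans hFY.subset, hbY⟩
    exact absurd (Finset.card_lt_card hFY) (not_lt.mpr (hFmax Y hYS))
  have hFrare : suppConj T items F < minsupp :=
    lt_of_le_of_lt (suppConj_anti T items hXF) hXrare
  have hFA : F ∈ A := by
    simp only [A, MFCRMax, MFCR, Finset.mem_filter, Finset.mem_inter, MCMax, MCR,
      Finset.mem_powerset]
    refine ⟨⟨⟨⟨hFI, hFbond, hFrare⟩, ?_⟩, hFI, hFbond, hFtop⟩, hXF⟩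
    intro Y hY hFY hbY
    exact hFtop Y hY hFY (hbY ▸ hFbond)
  -- Existence of a minimal correlated rare & minimal rare subset G
  obtain ⟨G, hGS, hGmin⟩ :=
    (X.powerset.filter (fun Y => suppConj T items Y < minsupp)).exists_min_image
      Finset.card ⟨X, by simp [hXrare]⟩
  simp only [Finset.mem_filter, Finset.mem_powerset] at hGS
  obtain ⟨hGX, hGrare⟩ := hGS
  have hGne : G.Nonempty := by
    rcases G.eq_empty_or_nonempty with h | h
    · exfalso; subst h
      have : suppConj T items (∅ : Finset ι) = T.card := by
        simp [suppConj]
      rw [this] at hGrare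
      exact absurd hs2 (not_le.mpr hGrare)
    · exact h
  have hGbond : minbond ≤ bond T items G :=
    hXbond.trans (bond_anti T items hGX hGne hconjpos)
  obtain ⟨hGc, hGd⟩ := pos_of_bond_pos T items (lt_of_lt_of_le hb0 hGbond)
  have hGbot : ∀ Y ⊆ G, Y ⊂ G → ¬ suppConj T items Y < minsupp := by
    intro Y hY hYG hYrare
    have hYS : Y ∈ X.powerset.filter (fun Y => suppConj T items Y < minsupp) := by
      simp only [Finset.mem_filter, Finset.mem_powerset]
      exact ⟨hY.trans hGX, hYrare⟩
    exact absurd (Finset.card_lt_card hYG) (not_lt.mpr (hGmin Y hYS))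
  have hGB : G ∈ B := by
    simp only [B, MMCRMin, MMCR, Finset.mem_filter, Finset.mem_inter, MRMin, MCR,
      Finset.mem_powerset]
    refine ⟨⟨⟨⟨hGX.trans hXI, hGbond, hGrare⟩, ?_⟩, hGX.trans hXI, hGrare, hGbot⟩, hGX⟩
    intro Y hY hYG hbY
    have hYnotrare : ¬ suppConj T items Y < minsupp := hGbot Y hY hYG
    have hYne : Y.Nonempty := by
      rcases Y.eq_empty_or_nonempty with h | h
      · exfalso; subst h
        have hb0' : bond T items (∅ : Finset ι) = 0 := by simp [bond, suppDisj]
        rw [hb0'] at hbY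
        rw [← hbY] at hGbond
        exact absurd hGbond (not_le.mpr hb0)
      · exact h
    have hcc : suppConj T items G ≤ suppConj T items Y :=
      suppConj_anti T items hYG.subset
    have hdd : suppDisj T items Y ≤ suppDisj T items G :=
      suppDisj_mono T items hYG.subset
    have hdY : 0 < suppDisj T items Y :=
      lt_of_lt_of_le (lt_of_lt_of_le hGc hcc) (suppConj_le_suppDisj T items hYne)
    rw [bond, bond, div_eq_div_iff (by exact_mod_cast hdY.ne') (by exact_mod_cast hGd.ne')]
      at hbY
    have hkey : suppConj T items Y ≤ suppConj T items G := by
      have h1 : (suppConj T items Y : ℚ) * suppDisj T items G ≤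
          (suppConj T items G : ℚ) * suppDisj T items G := by
        calc (suppConj T items Y : ℚ) * suppDisj T items G
            = (suppConj T items G : ℚ) * suppDisj T items Y := hbY
          _ ≤ (suppConj T items G : ℚ) * suppDisj T items G := by
              apply mul_le_mul_of_nonneg_left (by exact_mod_cast hdd) (by positivity)
      have := le_of_mul_le_mul_right h1 (by exact_mod_cast hGd : (0:ℚ) < suppDisj T items G)
      exact_mod_cast this
    exact hYnotrare (lt_of_le_of_lt hkey hGrare)
  have hAne : A.Nonempty := ⟨F, hFA⟩
  have hBne : B.Nonempty := ⟨G, hGB⟩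
  refine ⟨hAne, hBne, ?_⟩
  dsimp only
  have hR1 : A.sup' hAne (suppConj T items) ≤ suppConj T items X :=
    Finset.sup'_le _ _ fun F' hF' =>
      suppConj_anti T items (Finset.mem_filter.mp hF').2
  have hR2 : suppConj T items X ≤ B.inf' hBne (suppConj T items) :=
    Finset.le_inf' _ _ fun G' hG' =>
      suppConj_anti T items (Finset.mem_filter.mp hG').2
  have hR3 : suppDisj T items X ≤ A.inf' hAne (suppDisj T items) :=
    Finset.le_inf' _ _ fun F' hF' =>
      suppDisj_mono T items (Finset.mem_filter.mp hF').2
  have hR4 : B.sup' hBne (suppDisj T items) ≤ suppDisj T items X :=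
    Finset.sup'_le _ _ fun G' hG' =>
      suppDisj_mono T items (Finset.mem_filter.mp hG').2
  have hR4pos : 0 < B.sup' hBne (suppDisj T items) :=
    lt_of_lt_of_le hGd (Finset.le_sup' _ hGB)
  have hR3pos : 0 < A.inf' hAne (suppDisj T items) := lt_of_lt_of_le hdisjpos hR3
  have h1 : min (A.sup' hAne (suppConj T items)) (B.inf' hBne (suppConj T items)) ≤
      suppConj T items X := (min_le_left _ _).trans hR1
  have h2 : suppConj T items X ≤
      max (A.sup' hAne (suppConj T items)) (B.inf' hBne (suppConj T items)) :=
    hR2.trans (le_max_right _ _)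
  have h3 : min (A.inf' hAne (suppDisj T items)) (B.sup' hBne (suppDisj T items)) ≤
      suppDisj T items X := (min_le_right _ _).trans hR4
  have h4 : suppDisj T items X ≤
      max (A.inf' hAne (suppDisj T items)) (B.sup' hBne (suppDisj T items)) :=
    hR3.trans (le_max_left _ _)
  have h5 : 0 < min (A.inf' hAne (suppDisj T items)) (B.sup' hBne (suppDisj T items)) :=
    lt_min hR3pos hR4pos
  have h6 : 0 < max (A.inf' hAne (suppDisj T items)) (B.sup' hBne (suppDisj T items)) :=
    lt_of_lt_of_le hR3pos (le_max_left _ _)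
  refine ⟨h1, h2, h3, h4, h5, h6, ?_, ?_⟩
  · rw [bond]
    exact div_le_div₀ (by positivity) (by exact_mod_cast h1) (by exact_mod_cast hdisjpos)
      (by exact_mod_cast h4)
  · rw [bond]
    exact div_le_div₀ (by positivity) (by exact_mod_cast h2) (by exact_mod_cast h5)
      (by exact_mod_cast h3)
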